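/- The following series identity holds: √3 = (627/362) · Σ_{k=0}^{∞} ((1/4)_k (3/4)_k / (k! (3/2)_k)) · (131043/4293132484)^k, where the series on the right converges. -/

import Mathlib

open Finset Set

/-- The shifted factorial (Pochhammer symbol): `(x)_0 = 1` and
`(x)_n = x * (x+1) * ... * (x+n-1)`. -/
noncomputable def shiftedFactorial (x : ℝ) (n : ℕ) : ℝ :=
  ∏ i ∈ Finset.range n, (x + i)

/-- real binomial coefficient binom(1/2, n) -/
noncomputable def bchalf (n : ℕ) : ℝ :=
  (∏ i ∈ Finset.range n, (1/2 - (i:ℝ))) / (Nat.factorial n)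

noncomputable def Gb : ℝ → ℝ := fun y => ∑' n : ℕ, bchalf n * y ^ n

/-- real binomial coefficient binom(1/2, n) -/

lemma bchalf_zero : bchalf 0 = 1 := by simp [bchalf]

lemma bchalf_succ (n : ℕ) : bchalf (n+1) * (n+1) = (1/2 - n) * bchalf n := by
  have h : (Nat.factorial n : ℝ) ≠ 0 := by positivity
  simp only [bchalf, Finset.prod_range_succ, Nat.factorial_succ]
  push_cast
  field_simp

lemma bchalf_succ' (n : ℕ) : bchalf (n+1) = (1/2 - n) * bchalf n / (n+1) := by
  rw [eq_div_iff (by positivity : ((n:ℝ)+1) ≠ 0)]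
  exact bchalf_succ n

lemma abs_bchalf_mono (n : ℕ) : |bchalf (n+1)| ≤ |bchalf n| := by
  rw [bchalf_succ']
  rw [abs_div, abs_mul]
  have h1 : |(1/2 - (n:ℝ))| ≤ (n:ℝ) + 1 := by
    rw [abs_le]; constructor <;> [skip; skip] <;> nlinarith [Nat.cast_nonneg (α := ℝ) n]
  have h2 : |((n:ℝ)+1)| = (n:ℝ)+1 := abs_of_pos (by positivity)
  rw [h2, div_le_iff₀ (by positivity)]
  calc |1/2 - (n:ℝ)| * |bchalf n| ≤ ((n:ℝ)+1) * |bchalf n| := by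
        exact mul_le_mul_of_nonneg_right h1 (abs_nonneg _)
    _ = |bchalf n| * ((n:ℝ)+1) := by ring

lemma abs_bchalf_le_one (n : ℕ) : |bchalf n| ≤ 1 := by
  induction n with
  | zero => simp [bchalf_zero]
  | succ k ih => exact le_trans (abs_bchalf_mono k) ih

lemma abs_bchalf_le_half (n : ℕ) : |bchalf (n+1)| ≤ 1/2 := by
  induction n with
  | zero => rw [bchalf_succ' 0, bchalf_zero]; rw [abs_of_pos] <;> norm_num
  | succ k ih => exact le_trans (abs_bchalf_mono (k+1)) ih

lemma summable_Gb {y : ℝ} (hy : |y| < 1) : Summable (fun n : ℕ => bchalf n * y ^ n) := by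
  apply Summable.of_abs
  apply Summable.of_nonneg_of_le (fun n => abs_nonneg _) (fun n => ?_)
    (summable_geometric_of_lt_one (abs_nonneg y) hy)
  rw [abs_mul, abs_pow]
  calc |bchalf n| * |y| ^ n ≤ 1 * |y| ^ n := by
        exact mul_le_mul_of_nonneg_right (abs_bchalf_le_one n) (by positivity)
    _ = |y| ^ n := by ring

lemma summable_deriv_bound : Summable (fun n : ℕ => (n:ℝ) * (3/5 : ℝ) ^ (n-1)) := by
  have h := summable_pow_mul_geometric_of_norm_lt_one (R := ℝ) 1 (r := (3/5:ℝ)) (by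
    rw [Real.norm_eq_abs]; rw [abs_of_pos] <;> norm_num)
  apply Summable.of_nonneg_of_le (fun n => by positivity) (fun n => ?_) (h.mul_left (5/3))
  rcases n with _ | m
  · simp
  · rw [pow_succ]
    have : (m + 1 : ℕ) - 1 = m := rfl
    rw [this]
    push_cast
    apply le_of_eq
    ring

lemma hasDerivAt_Gb {y : ℝ} (hy : y ∈ Ioo (-(3/5):ℝ) (3/5)) :
    HasDerivAt Gb (∑' n : ℕ, (n:ℝ) * bchalf n * y ^ (n-1)) y := by
  apply hasDerivAt_tsum_of_isPreconnected summable_deriv_bound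
    (isOpen_Ioo (a := (-(3/5):ℝ)) (b := (3/5:ℝ))) (convex_Ioo _ _).isPreconnected
    (g := fun n z => bchalf n * z ^ n) (g' := fun n z => (n:ℝ) * bchalf n * z ^ (n-1))
    (y₀ := 0) ?_ ?_ ?_ ?_ hy
  · intro n z _
    have h := (hasDerivAt_pow n z).const_mul (bchalf n)
    convert h using 1
    · rfl
    ring
  · intro n z hz
    rw [Real.norm_eq_abs, abs_mul, abs_mul, abs_pow]
    rcases n with _ | m
    · simp
    · have hzb : |z| ≤ 3/5 := by
        rw [abs_le]; exact ⟨le_of_lt hz.1, le_of_lt hz.2⟩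
      have h1 : |bchalf (m+1)| ≤ 1 := abs_bchalf_le_one _
      have h2 : |z| ^ (m + 1 - 1) ≤ (3/5:ℝ) ^ (m+1-1) :=
        pow_le_pow_left₀ (abs_nonneg z) hzb _
      have h3 : |((m:ℝ)+1)| = (m:ℝ)+1 := abs_of_pos (by positivity)
      push_cast [h3, Nat.add_sub_cancel] at h2 ⊢
      calc ((m:ℝ)+1) * |bchalf (m+1)| * |z| ^ m
          ≤ ((m:ℝ)+1) * 1 * (3/5:ℝ)^m := by
            apply mul_le_mul (mul_le_mul_of_nonneg_left h1 (by positivity)) h2 (by positivity) (by positivity)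
        _ = ((m:ℝ)+1) * (3/5:ℝ)^m := by ring
  · exact ⟨by norm_num, by norm_num⟩
  · apply summable_Gb; rw [abs_zero]; norm_num

lemma summable_D {y : ℝ} (hy : |y| < 1) :
    Summable (fun n : ℕ => (n:ℝ) * bchalf n * y ^ (n-1)) := by
  apply (summable_nat_add_iff 1).mp
  apply Summable.of_abs
  have h1 : Summable (fun n : ℕ => ((n:ℝ)^1) * |y| ^ n) :=
    summable_pow_mul_geometric_of_norm_lt_one 1 (by rwa [Real.norm_eq_abs, abs_abs])
  have h2 : Summable (fun n : ℕ => ((n:ℝ)^1) * |y| ^ n + |y| ^ n) :=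
    h1.add (summable_geometric_of_lt_one (abs_nonneg y) hy)
  apply Summable.of_nonneg_of_le (fun n => abs_nonneg _) (fun n => ?_) h2
  rw [Nat.add_sub_cancel, abs_mul, abs_mul, abs_pow]
  have hb : |bchalf (n+1)| ≤ 1 := abs_bchalf_le_one _
  have hc : |((n:ℝ)+1)| = (n:ℝ)+1 := abs_of_pos (by positivity)
  have hp : (0:ℝ) ≤ |y| ^ n := by positivity
  push_cast [hc]
  nlinarith [mul_le_mul_of_nonneg_right hb hp, abs_nonneg (bchalf (n+1)),
    mul_le_mul_of_nonneg_left (mul_le_mul_of_nonneg_right hb hp) (by positivity : (0:ℝ) ≤ (n:ℝ))]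

lemma Gb_deriv_eq {y : ℝ} (hy : y ∈ Ioo (-(3/5):ℝ) (3/5)) :
    (1 + y) * (∑' n : ℕ, (n:ℝ) * bchalf n * y ^ (n-1)) = (1/2) * Gb y := by
  have hy1 : |y| < 1 := by rw [abs_lt]; constructor <;> [linarith [hy.1]; linarith [hy.2]]
  have hD := summable_D hy1
  have hS : Summable (fun n : ℕ => (1/2 - (n:ℝ)) * bchalf n * y ^ n) := by
    apply ((summable_nat_add_iff 1).mpr hD).congr
    intro n
    rw [Nat.add_sub_cancel]
    push_cast
    linear_combination y ^ n * bchalf_succ n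
  have hS2 : Summable (fun n : ℕ => (n:ℝ) * bchalf n * y ^ n) := by
    apply (hD.mul_left y).congr
    intro n
    rcases n with _ | m
    · simp
    · rw [Nat.add_sub_cancel, pow_succ]; push_cast; ring
  have hyD : y * (∑' n : ℕ, (n:ℝ) * bchalf n * y ^ (n-1))
      = ∑' n : ℕ, (n:ℝ) * bchalf n * y ^ n := by
    rw [← tsum_mul_left]
    apply tsum_congr
    intro n
    rcases n with _ | m
    · simp
    · rw [Nat.add_sub_cancel, pow_succ]; push_cast; ring
  have hshift : (∑' n : ℕ, (n:ℝ) * bchalf n * y ^ (n-1))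
      = ∑' n : ℕ, (1/2 - (n:ℝ)) * bchalf n * y ^ n := by
    rw [Summable.tsum_eq_zero_add hD]
    simp only [Nat.cast_zero, zero_mul, zero_add, Nat.add_sub_cancel]
    apply tsum_congr
    intro n
    push_cast
    linear_combination y ^ n * bchalf_succ n
  calc (1 + y) * (∑' n : ℕ, (n:ℝ) * bchalf n * y ^ (n-1))
      = (∑' n : ℕ, (n:ℝ) * bchalf n * y ^ (n-1))
        + y * (∑' n : ℕ, (n:ℝ) * bchalf n * y ^ (n-1)) := by ring
    _ = (∑' n : ℕ, (1/2 - (n:ℝ)) * bchalf n * y ^ n)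
        + ∑' n : ℕ, (n:ℝ) * bchalf n * y ^ n := by rw [hyD, hshift]
    _ = ∑' n : ℕ, ((1/2 - (n:ℝ)) * bchalf n * y ^ n + (n:ℝ) * bchalf n * y ^ n) :=
        (Summable.tsum_add hS hS2).symm
    _ = ∑' n : ℕ, (1/2) * (bchalf n * y ^ n) := tsum_congr fun n => by ring
    _ = (1/2) * Gb y := by rw [tsum_mul_left]; rfl

lemma Gb_zero : Gb 0 = 1 := by
  have : Gb 0 = ∑' n : ℕ, bchalf n * (0:ℝ) ^ n := rfl
  rw [this, tsum_eq_single 0 (fun n hn => by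
    rcases n with _ | m
    · exact absurd rfl hn
    · simp)]
  simp [bchalf_zero]

set_option maxHeartbeats 1000000 in
lemma Gb_pos {y : ℝ} (hy : |y| ≤ 1/2) : 1/2 ≤ Gb y := by
  have hy1 : |y| < 1 := lt_of_le_of_lt hy (by norm_num)
  have hsum := summable_Gb hy1
  have h0 : Gb y = 1 + ∑' n : ℕ, bchalf (n+1) * y ^ (n+1) := by
    have : Gb y = ∑' n : ℕ, bchalf n * y ^ n := rfl
    rw [this, Summable.tsum_eq_zero_add hsum, bchalf_zero]
    simp
  rw [h0]
  have hsum' : Summable (fun n : ℕ => bchalf (n+1) * y ^ (n+1)) :=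
    (summable_nat_add_iff 1).mpr hsum
  have habs : Summable (fun n : ℕ => |bchalf (n+1)| * |y| ^ (n+1)) := by
    simpa [abs_mul, abs_pow] using hsum'.abs
  have hgeo : Summable (fun n : ℕ => (1/4:ℝ) * (1/2)^n) :=
    (summable_geometric_of_lt_one (by norm_num) (by norm_num)).mul_left _
  have hterm : ∀ n : ℕ, |bchalf (n+1)| * |y| ^ (n+1) ≤ (1/4:ℝ) * (1/2)^n := by
    intro n
    have h1 := abs_bchalf_le_half n
    have h2 : |y| ^ (n+1) ≤ (1/2:ℝ)^(n+1) := pow_le_pow_left₀ (abs_nonneg y) hy _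
    have h3 : (0:ℝ) ≤ |y| ^ (n+1) := by positivity
    have h4 : (0:ℝ) ≤ |bchalf (n+1)| := abs_nonneg _
    calc |bchalf (n+1)| * |y| ^ (n+1) ≤ (1/2) * (1/2:ℝ)^(n+1) := by nlinarith
      _ = (1/4:ℝ) * (1/2)^n := by rw [pow_succ]; ring
  have hR : |∑' n : ℕ, bchalf (n+1) * y ^ (n+1)| ≤ 1/2 := by
    calc |∑' n : ℕ, bchalf (n+1) * y ^ (n+1)|
        ≤ ∑' n : ℕ, |bchalf (n+1)| * |y| ^ (n+1) := by
          have := norm_tsum_le_tsum_norm (f := fun n : ℕ => bchalf (n+1) * y ^ (n+1))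
            (by simpa [Real.norm_eq_abs] using habs)
          simpa [Real.norm_eq_abs] using this
      _ ≤ ∑' n : ℕ, (1/4:ℝ) * (1/2)^n := Summable.tsum_le_tsum hterm habs hgeo
      _ = 1/2 := by
          rw [tsum_mul_left, tsum_geometric_of_lt_one (by norm_num) (by norm_num)]
          norm_num
  have := abs_le.mp hR
  linarith [this.1]

lemma Gb_sq {z : ℝ} (hz : |z| ≤ 1/2) : (Gb z)^2 = 1 + z := by
  set H : ℝ → ℝ := fun y => (Gb y)^2 / (1 + y) with hH
  have key : ∀ y ∈ Icc (-(1/2):ℝ) (1/2), HasDerivAt H 0 y := by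
    intro y hy
    have hyI : y ∈ Ioo (-(3/5):ℝ) (3/5) := by
      constructor <;> [linarith [hy.1]; linarith [hy.2]]
    have hne : (1:ℝ) + y ≠ 0 := by have := hy.1; intro h; linarith
    have hG := hasDerivAt_Gb hyI
    have hGsq := hG.pow 2
    have hden : HasDerivAt (fun y : ℝ => 1 + y) 1 y := by
      simpa using (hasDerivAt_id y).const_add 1
    have hdiv := hGsq.div hden hne
    convert hdiv using 1
    · rfl
    · rfl
    · rfl
    have heq := Gb_deriv_eq hyI
    push_cast [Pi.pow_apply]
    linear_combination (-(2*Gb y)/((1+y)^2)) * heq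
  have hconst : ∀ z' ∈ Icc (-(1/2):ℝ) (1/2), H z' = H (-(1/2)) := by
    intro z' hz'
    have := constant_of_has_deriv_right_zero (f := H) (a := (-(1/2):ℝ)) (b := (1/2:ℝ))
      (fun x hx => ((key x hx).continuousAt).continuousWithinAt)
      (fun x hx => ((key x (Ico_subset_Icc_self hx)).hasDerivWithinAt))
    exact this z' hz'
  have h0 : H 0 = 1 := by simp [hH, Gb_zero]
  have hz' : z ∈ Icc (-(1/2):ℝ) (1/2) := abs_le.mp hz |> fun h => ⟨h.1, h.2⟩
  have h0' : (0:ℝ) ∈ Icc (-(1/2):ℝ) (1/2) := by constructor <;> norm_num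
  have : H z = 1 := by rw [hconst z hz', ← hconst 0 h0', h0]
  have hne : (1:ℝ) + z ≠ 0 := by have := hz'.1; intro h; linarith
  have := this
  rw [hH] at this
  field_simp at this
  linarith [this]

lemma Gb_eq_sqrt {z : ℝ} (hz : |z| ≤ 1/2) : Gb z = Real.sqrt (1 + z) := by
  have h1 := Gb_sq hz
  have h2 := Gb_pos hz
  rw [← h1, Real.sqrt_sq (by linarith)]

lemma hasSum_sqrt {z : ℝ} (hz : |z| ≤ 1/2) :
    HasSum (fun n : ℕ => bchalf n * z ^ n) (Real.sqrt (1 + z)) := by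
  have hs : Summable (fun n : ℕ => bchalf n * z ^ n) :=
    summable_Gb (lt_of_le_of_lt hz (by norm_num))
  have := hs.hasSum
  rwa [show (∑' n : ℕ, bchalf n * z ^ n) = Real.sqrt (1 + z) from (Gb_eq_sqrt hz)] at this

lemma sf_succ (x : ℝ) (n : ℕ) : shiftedFactorial x (n+1) = shiftedFactorial x n * (x + n) :=
  Finset.prod_range_succ _ _

lemma sf_pos {x : ℝ} (hx : 0 < x) (n : ℕ) : 0 < shiftedFactorial x n := by
  apply Finset.prod_pos
  intro i _
  positivity

lemma cross (k : ℕ) :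
    shiftedFactorial (1/4) k * shiftedFactorial (3/4) k * ((Nat.factorial (2*k+1) : ℝ))
    = 2 * (∏ i ∈ Finset.range (2*k+1), (1/2 - (i:ℝ))) * (Nat.factorial k : ℝ)
      * shiftedFactorial (3/2) k := by
  induction k with
  | zero => norm_num [shiftedFactorial, Nat.factorial]
  | succ k ih =>
    have e1 : 2*(k+1)+1 = (2*k+1)+1+1 := by omega
    rw [e1, sf_succ, sf_succ, sf_succ, Nat.factorial_succ (2*k+1+1), Nat.factorial_succ (2*k+1),
      Finset.prod_range_succ, Finset.prod_range_succ, Nat.factorial_succ k]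
    push_cast
    linear_combination ((1/4 + (k:ℝ)) * (3/4 + k) * (2*k+2) * (2*k+3)) * ih

lemma term_eq (k : ℕ) :
    shiftedFactorial (1/4) k * shiftedFactorial (3/4) k
      / ((Nat.factorial k : ℝ) * shiftedFactorial (3/2) k)
    = 2 * bchalf (2*k+1) := by
  have h1 : (Nat.factorial k : ℝ) ≠ 0 := by positivity
  have h2 : shiftedFactorial (3/2) k ≠ 0 := ne_of_gt (sf_pos (by norm_num) k)
  have h3 : (Nat.factorial (2*k+1) : ℝ) ≠ 0 := by positivity
  have hpos : (0:ℝ) < (Nat.factorial k : ℝ) * shiftedFactorial (3/2) k :=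
    mul_pos (by positivity) (sf_pos (by norm_num) k)
  have hpos2 : (0:ℝ) < (Nat.factorial (2*k+1) : ℝ) := by positivity
  rw [bchalf, ← mul_div_assoc, div_eq_div_iff hpos.ne' hpos2.ne']
  linear_combination cross k

theorem sqrt_three_series_c :
    Summable (fun k : ℕ => shiftedFactorial (1/4) k * shiftedFactorial (3/4) k / ((Nat.factorial k : ℝ) * shiftedFactorial (3/2) k) * (131043 / 4293132484 : ℝ) ^ k) ∧
    Real.sqrt 3 = (627 / 362 : ℝ) *
      ∑' k : ℕ, shiftedFactorial (1/4) k * shiftedFactorial (3/4) k / ((Nat.factorial k : ℝ) * shiftedFactorial (3/2) k) * (131043 / 4293132484 : ℝ) ^ k := by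
  set r : ℝ := Real.sqrt 131043 with hr
  have hr0 : 0 ≤ r := Real.sqrt_nonneg _
  have hr2 : r ^ 2 = 131043 := Real.sq_sqrt (by norm_num)
  have hr1 : 1 ≤ r := by
    rw [hr, show (1:ℝ) = Real.sqrt 1 by simp]
    exact Real.sqrt_le_sqrt (by norm_num)
  have hrle : r ≤ 363 := by
    rw [hr, show (363:ℝ) = Real.sqrt (363^2) by rw [Real.sqrt_sq] <;> norm_num]
    exact Real.sqrt_le_sqrt (by norm_num)
  set u : ℝ := r / 65522 with hu
  have hu0 : 0 < u := by
    rw [hu]; exact div_pos (by linarith) (by norm_num)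
  have huabs : |u| ≤ 1/2 := by
    rw [abs_of_pos hu0, hu]
    rw [div_le_iff₀ (by norm_num)]
    linarith
  have hune : u ≠ 0 := ne_of_gt hu0
  have hu2 : u^2 = 131043 / 4293132484 := by
    rw [hu, div_pow, hr2]; norm_num
  -- the two binomial series
  have H1 := hasSum_sqrt huabs
  have H2 := hasSum_sqrt (z := -u) (by rwa [abs_neg])
  rw [show (1:ℝ) + -u = 1 - u by ring] at H2
  have H3 := H1.sub H2
  -- sqrt values
  have s1 : Real.sqrt (1 + u) = (r + 1) / 362 := by
    rw [show (1:ℝ) + u = ((r+1)/362)^2 by rw [hu]; linear_combination (-1/131044 : ℝ) * hr2]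
    exact Real.sqrt_sq (by positivity)
  have s2 : Real.sqrt (1 - u) = (r - 1) / 362 := by
    rw [show (1:ℝ) - u = ((r-1)/362)^2 by rw [hu]; linear_combination (-1/131044 : ℝ) * hr2]
    exact Real.sqrt_sq (by linarith)
  rw [s1, s2, show (r+1)/362 - (r-1)/362 = 1/181 by ring] at H3
  -- extract odd terms
  have hg : Function.Injective (fun k : ℕ => 2*k+1) := by
    intro a b h; simp only at h; omega
  have hvan : ∀ n : ℕ, n ∉ Set.range (fun k : ℕ => 2*k+1) →
      (bchalf n * u ^ n - bchalf n * (-u) ^ n) = 0 := by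
    intro n hn
    rcases Nat.even_or_odd n with he | ho
    · rw [he.neg_pow]; ring
    · obtain ⟨m, hm⟩ := ho
      exact absurd ⟨m, by simp only []; omega⟩ hn
  have H4 : HasSum (fun k : ℕ => 2 * bchalf (2*k+1) * u ^ (2*k+1)) (1/181 : ℝ) := by
    have H3' := (Function.Injective.hasSum_iff hg hvan).mpr H3
    convert H3' using 1
    funext k
    simp only [Function.comp_apply]
    have hodd : Odd (2*k+1) := ⟨k, by omega⟩
    rw [hodd.neg_pow]
    ring
  -- divide by u
  have H5 : HasSum (fun k : ℕ => shiftedFactorial (1/4) k * shiftedFactorial (3/4) k / ((Nat.factorial k : ℝ) * shiftedFactorial (3/2) k) * (131043 / 4293132484 : ℝ) ^ k) ((1/181 : ℝ) / u) := by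
    have := H4.div_const u
    convert this using 1
    · rfl
    funext k
    rw [term_eq k, ← hu2, ← pow_mul]
    rw [pow_succ]
    field_simp
  constructor
  · exact H5.summable
  · rw [H5.tsum_eq]
    have hr3 : r = 209 * Real.sqrt 3 := by
      rw [hr, show (131043:ℝ) = 209^2*3 by norm_num, Real.sqrt_mul (by positivity),
        Real.sqrt_sq (by norm_num)]
    have h3 : Real.sqrt 3 ^ 2 = 3 := Real.sq_sqrt (by norm_num)
    have h3pos : 0 < Real.sqrt 3 := Real.sqrt_pos.mpr (by norm_num)
    rw [hu, hr3]
    field_simp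
    nlinarith [h3]
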